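/- Let φ : ℝ → ℝ be C² increasing with φ' > 0, and suppose |φ''(x)| ≤ C·(φ'(x))² for all x. Then for all x, y ∈ ℝ with |φ(x) − φ(y)| ≤ 1, one has e^{−C} ≤ φ'(x)/φ'(y) ≤ e^{C}. -/

import Mathlib

/-- If `|φ''| ≤ C (φ')²`, then `e^{-C} ≤ φ'(x)/φ'(y) ≤ e^{C}` whenever
`|φ(x) - φ(y)| ≤ 1`. -/
theorem stmt4 (φ : ℝ → ℝ) (hsmooth : ContDiff ℝ 2 φ) (hmono : StrictMono φ)
    (hpos : ∀ x, 0 < deriv φ x)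
    (C : ℝ) (hC : 0 < C) (hineq : ∀ x, |deriv (deriv φ) x| ≤ C * (deriv φ x)^2)
    (x y : ℝ) (hxy : |φ x - φ y| ≤ 1) :
    Real.exp (-C) ≤ deriv φ x / deriv φ y ∧ deriv φ x / deriv φ y ≤ Real.exp C := by
  have hφdiff : Differentiable ℝ φ := hsmooth.differentiable (by norm_num)
  have h1 : ContDiff ℝ 1 (deriv φ) := by
    have := (contDiff_succ_iff_deriv (n := 1)).mp (by exact_mod_cast hsmooth)
    exact this.2.2
  have hφ'diff : Differentiable ℝ (deriv φ) := h1.differentiable one_ne_zero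
  -- derivative of log (deriv φ)
  have hlog : ∀ t, HasDerivAt (fun s => Real.log (deriv φ s))
      (deriv (deriv φ) t / deriv φ t) t := fun t =>
    ((hφ'diff t).hasDerivAt).log (hpos t).ne'
  have hphi : ∀ t, HasDerivAt φ (deriv φ t) t := fun t => (hφdiff t).hasDerivAt
  -- h₊ := log φ' + C φ is monotone
  have hplus : Monotone (fun t => Real.log (deriv φ t) + C * φ t) := by
    apply monotone_of_deriv_nonneg
    · exact fun t => (((hlog t).add ((hphi t).const_mul C)).differentiableAt)
    · intro t
      rw [(show HasDerivAt (fun t => Real.log (deriv φ t) + C * φ t) _ t from (hlog t).add ((hphi t).const_mul C)).deriv]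
      have h2 : -(C * (deriv φ t)^2) ≤ deriv (deriv φ) t := neg_le_of_abs_le (hineq t)
      have hp := hpos t
      have : -(C * deriv φ t) ≤ deriv (deriv φ) t / deriv φ t := by
        rw [le_div_iff₀ hp]; nlinarith [sq_nonneg (deriv φ t)]
      linarith
  -- h₋ := log φ' - C φ is antitone
  have hminus : Antitone (fun t => Real.log (deriv φ t) - C * φ t) := by
    apply antitone_of_deriv_nonpos
    · exact fun t => (((hlog t).sub ((hphi t).const_mul C)).differentiableAt)
    · intro t
      rw [(show HasDerivAt (fun t => Real.log (deriv φ t) - C * φ t) _ t from (hlog t).sub ((hphi t).const_mul C)).deriv]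
      have h2 : deriv (deriv φ) t ≤ C * (deriv φ t)^2 := le_of_abs_le (hineq t)
      have hp := hpos t
      have : deriv (deriv φ) t / deriv φ t ≤ C * deriv φ t := by
        rw [div_le_iff₀ hp]; nlinarith
      linarith
  -- key bound: |log φ'(x) - log φ'(y)| ≤ C
  have key : ∀ a b : ℝ, a ≤ b → |φ a - φ b| ≤ 1 →
      |Real.log (deriv φ a) - Real.log (deriv φ b)| ≤ C := by
    intro a b hab hab1
    have hmono' : φ a ≤ φ b := hmono.monotone hab
    have h1' : φ b - φ a ≤ 1 := by
      rw [abs_sub_comm] at hab1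
      have := le_of_abs_le hab1; linarith
    have hp := hplus hab
    have hm := hminus hab
    simp only at hp hm
    rw [abs_le]
    constructor <;> nlinarith
  have keyxy : |Real.log (deriv φ x) - Real.log (deriv φ y)| ≤ C := by
    rcases le_total x y with h | h
    · exact key x y h hxy
    · rw [abs_sub_comm]; rw [abs_sub_comm] at hxy; exact key y x h hxy
  rw [abs_le] at keyxy
  have hpx := hpos x
  have hpy := hpos y
  have hratio : deriv φ x / deriv φ y =
      Real.exp (Real.log (deriv φ x) - Real.log (deriv φ y)) := by
    rw [Real.exp_sub, Real.exp_log hpx, Real.exp_log hpy]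
  rw [hratio]
  exact ⟨Real.exp_le_exp.mpr keyxy.1, Real.exp_le_exp.mpr keyxy.2⟩
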